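/- (Necessity, n=2) Let Σ be a 4×4 real symmetric positive definite matrix with eigenemittances ε₁, ε₂ and projected emittances ε̃₁, ε̃₂. Then ε̃₁ + ε̃₂ ≥ ε₁ + ε₂ and |ε̃₁ − ε̃₂| ≤ |ε₁ − ε₂|. -/

import Mathlib

open Matrix Polynomial

noncomputable section

/-- The 2×2 standard symplectic matrix. -/
def J2 : Matrix (Fin 2) (Fin 2) ℝ := !![0, 1; -1, 0]

/-- The 2n×2n block-diagonal symplectic matrix `diag(J₂, ..., J₂)`. -/
def Jblock (n : ℕ) : Matrix (Fin (2 * n)) (Fin (2 * n)) ℝ :=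
  fun i j =>
    if i.val / 2 = j.val / 2 then
      J2 ⟨i.val % 2, by omega⟩ ⟨j.val % 2, by omega⟩
    else 0

/-- The 2×2 block of a 2n×2n matrix at block position (m, k). -/
def blk {n : ℕ} (A : Matrix (Fin (2 * n)) (Fin (2 * n)) ℝ) (m k : Fin n) :
    Matrix (Fin 2) (Fin 2) ℝ :=
  fun i j =>
    A ⟨2 * m.val + i.val, by have := m.isLt; have := i.isLt; omega⟩
      ⟨2 * k.val + j.val, by have := k.isLt; have := j.isLt; omega⟩

/-- `S` has eigenemittances `ε`: the spectrum of `S · J_{2n}` (over ℂ, with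
multiplicity) is `±iε₁, ..., ±iε_n`. -/
def hasEigenemittances {n : ℕ} (S : Matrix (Fin (2 * n)) (Fin (2 * n)) ℝ)
    (ε : Fin n → ℝ) : Prop :=
  ((S * Jblock n).map (Complex.ofReal)).charpoly =
    ∏ m : Fin n, ((X - C (Complex.I * (ε m : ℂ))) * (X + C (Complex.I * (ε m : ℂ))))

set_option maxHeartbeats 2000000

lemma evalcp {n : Type*} [DecidableEq n] [Fintype n] (M : Matrix n n ℝ) (r : ℝ) :
    M.charpoly.eval r = (r • (1 : Matrix n n ℝ) - M).det := by
  rw [Matrix.charpoly, Polynomial.eval, ← coe_eval₂RingHom, RingHom.map_det]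
  congr 1
  ext i j
  by_cases h : i = j <;>
    simp [h, Matrix.charmatrix_apply, Matrix.one_apply, Matrix.smul_apply]

lemma keyeval (S : Matrix (Fin (2*2)) (Fin (2*2)) ℝ) (ε₁ ε₂ : ℝ)
    (hε : hasEigenemittances S ![ε₁, ε₂]) (r : ℝ) :
    (r • (1 : Matrix (Fin (2*2)) (Fin (2*2)) ℝ) - S * Jblock 2).det
      = (r^2 + ε₁^2) * (r^2 + ε₂^2) := by
  have h := congrArg (Polynomial.eval (r : ℂ)) hε
  rw [show ((S * Jblock 2).map Complex.ofReal) = (S * Jblock 2).map Complex.ofRealHom from rfl,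
    Matrix.charpoly_map] at h
  rw [show ((r:ℂ)) = Complex.ofRealHom r from rfl, Polynomial.eval_map,
    Polynomial.eval₂_hom, evalcp] at h
  simp only [Polynomial.eval_prod, Fin.prod_univ_two, Polynomial.eval_mul,
    Polynomial.eval_sub, Polynomial.eval_add, Polynomial.eval_X, Polynomial.eval_C,
    Matrix.cons_val_zero, Matrix.cons_val_one, Matrix.head_cons] at h
  have h2 : (Complex.ofRealHom ((r • (1 : Matrix (Fin (2*2)) (Fin (2*2)) ℝ) - S * Jblock 2).det))
      = Complex.ofRealHom ((r^2 + ε₁^2) * (r^2 + ε₂^2)) := by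
    rw [h]; ring_nf; simp [Complex.I_sq]; try ring
  exact Complex.ofReal_injective h2

lemma det4' (a b c d e f g h i j k l m n o p : ℝ) :
    (!![a,b,c,d; e,f,g,h; i,j,k,l; m,n,o,p] : Matrix (Fin (2*2)) (Fin (2*2)) ℝ).det =
      a*f*k*p - a*f*l*o - a*g*j*p + a*g*l*n + a*h*j*o - a*h*k*n
      - b*e*k*p + b*e*l*o + b*g*i*p - b*g*l*m - b*h*i*o + b*h*k*m
      + c*e*j*p - c*e*l*n - c*f*i*p + c*f*l*m + c*h*i*n - c*h*j*m
      - d*e*j*o + d*e*k*n + d*f*i*o - d*f*k*m - d*g*i*n + d*g*j*m := by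
  simp [Matrix.det_succ_row_zero, Fin.sum_univ_succ, Fin.succAbove]
  ring


lemma psd2 (p q r : ℝ) (h : ∀ u v : ℝ, 0 ≤ p*u^2 + 2*q*u*v + r*v^2) :
    0 ≤ p*r - q^2 := by
  have hp : 0 ≤ p := by have := h 1 0; linarith [this]; 
  rcases eq_or_lt_of_le hp with hp0 | hp0
  · -- p = 0
    by_contra hneg
    push_neg at hneg
    have hq : q ≠ 0 := by intro h0; rw [← hp0, h0] at hneg; nlinarith
    have := h (-(r+1)/(2*q)) 1
    rw [← hp0] at this
    have h2 : 2*q*(-(r+1)/(2*q)) = -(r+1) := by field_simp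
    nlinarith [this]
  · have := h (-q) p
    nlinarith [this]

lemma sqrtL (p q r u v w : ℝ) (hp : 0 ≤ p) (hr : 0 ≤ r) (hq : q^2 ≤ p*r)
    (hu : 0 ≤ u) (hw : 0 ≤ w) (hv : v^2 ≤ u*w) :
    2*Real.sqrt ((p*r - q^2)*(u*w - v^2)) ≤ p*w + r*u - 2*q*v := by
  set α := Real.sqrt (p*r) with hαdef
  set β := Real.sqrt (u*w) with hβdef
  have hα : α^2 = p*r := Real.sq_sqrt (le_trans (sq_nonneg q) hq)
  have hβ : β^2 = u*w := Real.sq_sqrt (le_trans (sq_nonneg v) hv)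
  have hα0 : 0 ≤ α := Real.sqrt_nonneg _
  have hβ0 : 0 ≤ β := Real.sqrt_nonneg _
  have hqα : |q| ≤ α := by nlinarith [sq_abs q, abs_nonneg q]
  have hvβ : |v| ≤ β := by nlinarith [sq_abs v, abs_nonneg v]
  have h1 : Real.sqrt ((p*r - q^2)*(u*w - v^2)) ≤ α*β - |q| * |v| := by
    have hnn : 0 ≤ α*β - |q| * |v| := by nlinarith [abs_nonneg q, abs_nonneg v]
    have hle : (p*r - q^2)*(u*w - v^2) ≤ (α*β - |q| * |v|)^2 := by
      nlinarith [sq_nonneg (α*|v| - β*|q|), sq_abs q, sq_abs v, abs_nonneg q, abs_nonneg v]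
    calc Real.sqrt ((p*r - q^2)*(u*w - v^2)) ≤ Real.sqrt ((α*β - |q| * |v|)^2) :=
          Real.sqrt_le_sqrt hle
      _ = α*β - |q| * |v| := by rw [Real.sqrt_sq hnn]
  have hab : α*β = Real.sqrt (p*w) * Real.sqrt (r*u) := by
    rw [hαdef, hβdef, ← Real.sqrt_mul (mul_nonneg hp hr), ← Real.sqrt_mul (mul_nonneg hp hw)]
    ring_nf
  have h2 : 2*(α*β) ≤ p*w + r*u := by
    rw [hab]
    nlinarith [sq_nonneg (Real.sqrt (p*w) - Real.sqrt (r*u)),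
      Real.sq_sqrt (mul_nonneg hp hw), Real.sq_sqrt (mul_nonneg hr hu)]
  have h3 : q*v ≤ |q| * |v| := by
    rw [← abs_mul]; exact le_abs_self _
  linarith

lemma final (DA DB DS d e1 e2 : ℝ) (hDA : 0 < DA) (hDB : 0 < DB)
    (he1 : 0 < e1) (he2 : 0 < e2) (hDS : DS = (e1*e2)^2)
    (hsum : e1^2 + e2^2 = DA + DB + 2*d)
    (hfis : DS + d^2 ≤ DA*DB)
    (hkey : 2*Real.sqrt (DA*DB)*|d| ≤ DA*DB + d^2 - DS) :
    e1 + e2 ≤ Real.sqrt DA + Real.sqrt DB ∧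
      |Real.sqrt DA - Real.sqrt DB| ≤ |e1 - e2| := by
  set a := Real.sqrt DA
  set b := Real.sqrt DB
  have ha2 : a^2 = DA := Real.sq_sqrt hDA.le
  have hb2 : b^2 = DB := Real.sq_sqrt hDB.le
  have ha0 : 0 < a := Real.sqrt_pos.mpr hDA
  have hb0 : 0 < b := Real.sqrt_pos.mpr hDB
  have hab : a*b = Real.sqrt (DA*DB) := (Real.sqrt_mul hDA.le _).symm
  have habd : |d| < a*b := by
    nlinarith [sq_abs d, abs_nonneg d, mul_pos ha0 hb0, mul_pos he1 he2,
      sq_nonneg (e1*e2)]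
  have hd1 : d ≤ |d| := le_abs_self d
  have hd2 : -d ≤ |d| := neg_le_abs d
  have he : 0 < e1*e2 := mul_pos he1 he2
  have hkey' : 2*(a*b)*|d| ≤ a^2*b^2 + d^2 - (e1*e2)^2 := by
    rw [hab]; nlinarith [hkey]
  have h1 : e1*e2 ≤ a*b - d := by
    nlinarith [mul_pos ha0 hb0, habd, abs_nonneg d, hkey', hd1,
      mul_le_mul_of_nonneg_left hd1 (by positivity : (0:ℝ) ≤ 2*(a*b))]
  have h2 : e1*e2 ≤ a*b + d := by
    nlinarith [mul_pos ha0 hb0, habd, abs_nonneg d, hkey', hd2,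
      mul_le_mul_of_nonneg_left hd2 (by positivity : (0:ℝ) ≤ 2*(a*b))]
  constructor
  · nlinarith [add_pos he1 he2, add_pos ha0 hb0]
  · rw [← Real.sqrt_sq_eq_abs, ← Real.sqrt_sq_eq_abs (e1 - e2)]
    apply Real.sqrt_le_sqrt
    nlinarith


lemma mainScalar (p00 p01 p02 p03 p11 p12 p13 p22 p23 p33 e1 e2 : ℝ)
    (hp22 : 0 < p22)
    (hDA : 0 < (p00*p11 - p01^2))
    (hDB : 0 < (p22*p33 - p23^2))
    (he1 : 0 < e1) (he2 : 0 < e2)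
    (hDS : (p00*p11*p22*p33 - p00*p11*p23*p23 - p00*p12*p12*p33 + p00*p12*p23*p13 + p00*p13*p12*p23 - p00*p13*p22*p13 - p01*p01*p22*p33 + p01*p01*p23*p23 + p01*p12*p02*p33 - p01*p12*p23*p03 - p01*p13*p02*p23 + p01*p13*p22*p03 + p02*p01*p12*p33 - p02*p01*p23*p13 - p02*p11*p02*p33 + p02*p11*p23*p03 + p02*p13*p02*p13 - p02*p13*p12*p03 - p03*p01*p12*p23 + p03*p01*p22*p13 + p03*p11*p02*p23 - p03*p11*p22*p03 - p03*p12*p02*p13 + p03*p12*p12*p03) = (e1*e2)^2)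
    (hsum : e1^2 + e2^2 = (p00*p11 - p01^2) + (p22*p33 - p23^2) + 2*(p02*p13 - p03*p12))
    (hX : ∀ u0 u1 : ℝ, 0 ≤ ((p22*p33 - p23^2)*p00 - (p33*p02^2 - 2*p23*p02*p03 + p22*p03^2))*u0^2 + 2*((p22*p33 - p23^2)*p01 - (p33*p02*p12 - p23*(p02*p13 + p03*p12) + p22*p03*p13))*u0*u1 + ((p22*p33 - p23^2)*p11 - (p33*p12^2 - 2*p23*p12*p13 + p22*p13^2))*u1^2) :
    e1 + e2 ≤ Real.sqrt (p00*p11 - p01^2) + Real.sqrt (p22*p33 - p23^2) ∧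
      |Real.sqrt (p00*p11 - p01^2) - Real.sqrt (p22*p33 - p23^2)| ≤ |e1 - e2| := by
  have hy11 : 0 ≤ (p33*p02^2 - 2*p23*p02*p03 + p22*p03^2) := by
    nlinarith [sq_nonneg (p23*p02 - p22*p03), mul_nonneg hDB.le (sq_nonneg p02), hp22]
  have hy22 : 0 ≤ (p33*p12^2 - 2*p23*p12*p13 + p22*p13^2) := by
    nlinarith [sq_nonneg (p23*p12 - p22*p13), mul_nonneg hDB.le (sq_nonneg p12), hp22]
  have hyv : (p33*p02*p12 - p23*(p02*p13 + p03*p12) + p22*p03*p13)^2 ≤ (p33*p02^2 - 2*p23*p02*p03 + p22*p03^2)*(p33*p12^2 - 2*p23*p12*p13 + p22*p13^2) := by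
    nlinarith [mul_nonneg (sq_nonneg (p02*p13 - p03*p12)) hDB.le]
  have hx11 : 0 ≤ ((p22*p33 - p23^2)*p00 - (p33*p02^2 - 2*p23*p02*p03 + p22*p03^2)) := by nlinarith [hX 1 0]
  have hx22 : 0 ≤ ((p22*p33 - p23^2)*p11 - (p33*p12^2 - 2*p23*p12*p13 + p22*p13^2)) := by nlinarith [hX 0 1]
  have hdetX : 0 ≤ ((p22*p33 - p23^2)*p00 - (p33*p02^2 - 2*p23*p02*p03 + p22*p03^2))*((p22*p33 - p23^2)*p11 - (p33*p12^2 - 2*p23*p12*p13 + p22*p13^2)) - ((p22*p33 - p23^2)*p01 - (p33*p02*p12 - p23*(p02*p13 + p03*p12) + p22*p03*p13))^2 := psd2 _ _ _ hX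
  have hxq : ((p22*p33 - p23^2)*p01 - (p33*p02*p12 - p23*(p02*p13 + p03*p12) + p22*p03*p13))^2 ≤ ((p22*p33 - p23^2)*p00 - (p33*p02^2 - 2*p23*p02*p03 + p22*p03^2))*((p22*p33 - p23^2)*p11 - (p33*p12^2 - 2*p23*p12*p13 + p22*p13^2)) := by linarith
  have hfis0 : 0 ≤ ((p22*p33 - p23^2)*p00 - (p33*p02^2 - 2*p23*p02*p03 + p22*p03^2))*(p33*p12^2 - 2*p23*p12*p13 + p22*p13^2) + ((p22*p33 - p23^2)*p11 - (p33*p12^2 - 2*p23*p12*p13 + p22*p13^2))*(p33*p02^2 - 2*p23*p02*p03 + p22*p03^2) - 2*((p22*p33 - p23^2)*p01 - (p33*p02*p12 - p23*(p02*p13 + p03*p12) + p22*p03*p13))*(p33*p02*p12 - p23*(p02*p13 + p03*p12) + p22*p03*p13) :=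
    le_trans (by positivity) (sqrtL ((p22*p33 - p23^2)*p00 - (p33*p02^2 - 2*p23*p02*p03 + p22*p03^2)) ((p22*p33 - p23^2)*p01 - (p33*p02*p12 - p23*(p02*p13 + p03*p12) + p22*p03*p13)) ((p22*p33 - p23^2)*p11 - (p33*p12^2 - 2*p23*p12*p13 + p22*p13^2)) (p33*p02^2 - 2*p23*p02*p03 + p22*p03^2) (p33*p02*p12 - p23*(p02*p13 + p03*p12) + p22*p03*p13) (p33*p12^2 - 2*p23*p12*p13 + p22*p13^2) hx11 hx22 hxq hy11 hy22 hyv)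
  have hEq1 : ((p22*p33 - p23^2)*p00 - (p33*p02^2 - 2*p23*p02*p03 + p22*p03^2))*(p33*p12^2 - 2*p23*p12*p13 + p22*p13^2) + ((p22*p33 - p23^2)*p11 - (p33*p12^2 - 2*p23*p12*p13 + p22*p13^2))*(p33*p02^2 - 2*p23*p02*p03 + p22*p03^2) - 2*((p22*p33 - p23^2)*p01 - (p33*p02*p12 - p23*(p02*p13 + p03*p12) + p22*p03*p13))*(p33*p02*p12 - p23*(p02*p13 + p03*p12) + p22*p03*p13)
      = (p22*p33 - p23^2)*((p00*p11 - p01^2)*(p22*p33 - p23^2) - (e1*e2)^2 - (p02*p13 - p03*p12)^2) := by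
    linear_combination (-((p22*p33 - p23^2)))*hDS
  rw [hEq1] at hfis0
  have hfis : (e1*e2)^2 + (p02*p13 - p03*p12)^2 ≤ (p00*p11 - p01^2)*(p22*p33 - p23^2) := by nlinarith [hfis0, hDB]
  have hz0 : 0 ≤ (p22*p33 - p23^2)*p00 := by linarith
  have hz1 : 0 ≤ (p22*p33 - p23^2)*p11 := by linarith
  have hzq : ((p22*p33 - p23^2)*p01)^2 ≤ ((p22*p33 - p23^2)*p00)*((p22*p33 - p23^2)*p11) := by
    nlinarith [mul_pos (mul_pos hDB hDB) hDA]
  have hZ := sqrtL ((p22*p33 - p23^2)*p00) ((p22*p33 - p23^2)*p01) ((p22*p33 - p23^2)*p11) (p33*p02^2 - 2*p23*p02*p03 + p22*p03^2) (p33*p02*p12 - p23*(p02*p13 + p03*p12) + p22*p03*p13) (p33*p12^2 - 2*p23*p12*p13 + p22*p13^2) hz0 hz1 hzq hy11 hy22 hyv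
  have hss : (((p22*p33 - p23^2)*p00)*((p22*p33 - p23^2)*p11) - ((p22*p33 - p23^2)*p01)^2)*((p33*p02^2 - 2*p23*p02*p03 + p22*p03^2)*(p33*p12^2 - 2*p23*p12*p13 + p22*p13^2) - (p33*p02*p12 - p23*(p02*p13 + p03*p12) + p22*p03*p13)^2)
      = ((p22*p33 - p23^2)*Real.sqrt ((p00*p11 - p01^2)*(p22*p33 - p23^2))*|(p02*p13 - p03*p12)|)^2 := by
    have h2 : ((p22*p33 - p23^2)*Real.sqrt ((p00*p11 - p01^2)*(p22*p33 - p23^2))*|(p02*p13 - p03*p12)|)^2 = (p22*p33 - p23^2)^2*((p00*p11 - p01^2)*(p22*p33 - p23^2))*(p02*p13 - p03*p12)^2 := by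
      rw [mul_pow, mul_pow, Real.sq_sqrt (by positivity : (0:ℝ) ≤ (p00*p11 - p01^2)*(p22*p33 - p23^2)), sq_abs]
    rw [h2]; ring
  rw [hss, Real.sqrt_sq (by positivity)] at hZ
  have hEq2 : ((p22*p33 - p23^2)*p00)*(p33*p12^2 - 2*p23*p12*p13 + p22*p13^2) + ((p22*p33 - p23^2)*p11)*(p33*p02^2 - 2*p23*p02*p03 + p22*p03^2) - 2*((p22*p33 - p23^2)*p01)*(p33*p02*p12 - p23*(p02*p13 + p03*p12) + p22*p03*p13)
      = (p22*p33 - p23^2)*((p00*p11 - p01^2)*(p22*p33 - p23^2) + (p02*p13 - p03*p12)^2 - (e1*e2)^2) := by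
    linear_combination (-((p22*p33 - p23^2)))*hDS
  rw [hEq2] at hZ
  have hkey : 2*Real.sqrt ((p00*p11 - p01^2)*(p22*p33 - p23^2))*|(p02*p13 - p03*p12)| ≤ (p00*p11 - p01^2)*(p22*p33 - p23^2) + (p02*p13 - p03*p12)^2 - (e1*e2)^2 :=
    le_of_mul_le_mul_left (by linarith) hDB
  exact final (p00*p11 - p01^2) (p22*p33 - p23^2) ((e1*e2)^2) (p02*p13 - p03*p12) e1 e2 hDA hDB he1 he2 rfl hsum hfis hkey


/-- Necessity (n = 2): the projected emittances of a 4×4 beam matrix satisfy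
`ε̃₁ + ε̃₂ ≥ ε₁ + ε₂` and `|ε̃₁ − ε̃₂| ≤ |ε₁ − ε₂|`. -/
theorem stmt18 (S : Matrix (Fin (2 * 2)) (Fin (2 * 2)) ℝ) (hS : S.PosDef)
    (ε₁ ε₂ : ℝ) (h₁ : 0 < ε₁) (h₂ : 0 < ε₂)
    (hε : hasEigenemittances S ![ε₁, ε₂]) :
    ε₁ + ε₂ ≤ Real.sqrt (blk S 0 0).det + Real.sqrt (blk S 1 1).det ∧
    |Real.sqrt (blk S 0 0).det - Real.sqrt (blk S 1 1).det| ≤ |ε₁ - ε₂| := by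
  have hsym0 : ∀ i j, S j i = S i j := by
    intro i j
    have h := congrFun (congrFun hS.1 j) i
    simp [Matrix.conjTranspose_apply] at h
    exact h.symm
  have hs10 : S 1 0 = S 0 1 := hsym0 0 1
  have hs20 : S 2 0 = S 0 2 := hsym0 0 2
  have hs21 : S 2 1 = S 1 2 := hsym0 1 2
  have hs30 : S 3 0 = S 0 3 := hsym0 0 3
  have hs31 : S 3 1 = S 1 3 := hsym0 1 3
  have hs32 : S 3 2 = S 2 3 := hsym0 2 3
  have hq : ∀ a b c d : ℝ, 0 ≤ (S 0 0)*a^2 + (S 1 1)*b^2 + (S 2 2)*c^2 + (S 3 3)*d^2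
      + 2*(S 0 1)*a*b + 2*(S 0 2)*a*c + 2*(S 0 3)*a*d + 2*(S 1 2)*b*c + 2*(S 1 3)*b*d
      + 2*(S 2 3)*c*d := by
    intro a b c d
    have h := hS.posSemidef.dotProduct_mulVec_nonneg ![a, b, c, d]
    simp [dotProduct, Matrix.mulVec, Fin.sum_univ_four] at h
    simp only [hs10, hs20, hs21, hs30, hs31, hs32] at h
    nlinarith [h]
  have hp00 : 0 < S 0 0 := by
    have h := hS.dotProduct_mulVec_pos (x := ![1, 0, 0, 0]) (by
      intro hcon; have := congrFun hcon 0; norm_num at this)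
    simp [dotProduct, Matrix.mulVec, Fin.sum_univ_four] at h
    linarith [h]
  have hp22 : 0 < S 2 2 := by
    have h := hS.dotProduct_mulVec_pos (x := ![0, 0, 1, 0]) (by
      intro hcon; have := congrFun hcon 2; exact one_ne_zero (α := ℝ) this)
    simp [dotProduct, Matrix.mulVec, Fin.sum_univ_four] at h
    linarith [h]
  have hDA : 0 < (S 0 0) * (S 1 1) - (S 0 1)^2 := by
    have h := hS.dotProduct_mulVec_pos (x := ![-(S 0 1), S 0 0, 0, 0]) (by
      intro hcon; have := congrFun hcon 1; simp at this; exact absurd this hp00.ne')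
    simp [dotProduct, Matrix.mulVec, Fin.sum_univ_four] at h
    simp only [hs10] at h
    nlinarith [h, hp00]
  have hDB : 0 < (S 2 2) * (S 3 3) - (S 2 3)^2 := by
    have h := hS.dotProduct_mulVec_pos (x := ![0, 0, -(S 2 3), S 2 2]) (by
      intro hcon; have := congrFun hcon 3; simp at this; exact absurd this hp22.ne')
    simp [dotProduct, Matrix.mulVec, Fin.sum_univ_four] at h
    simp only [hs32] at h
    nlinarith [h, hp22]
  have hNr : ∀ r : ℝ, (r • (1 : Matrix (Fin (2*2)) (Fin (2*2)) ℝ) - S * Jblock 2) =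
      !![r + S 0 1, -(S 0 0), S 0 3, -(S 0 2);
         S 1 1, r - S 1 0, S 1 3, -(S 1 2);
         S 2 1, -(S 2 0), r + S 2 3, -(S 2 2);
         S 3 1, -(S 3 0), S 3 3, r - S 3 2] := by
    intro r
    ext i j
    fin_cases i <;> fin_cases j <;>
      simp [Matrix.mul_apply, Fin.sum_univ_four, Jblock, J2, Matrix.one_apply,
        show ((0:Fin (2*2)) : ℕ) = 0 from rfl, show ((1:Fin (2*2)) : ℕ) = 1 from rfl,
        show ((2:Fin (2*2)) : ℕ) = 2 from rfl, show ((3:Fin (2*2)) : ℕ) = 3 from rfl,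
        Fin.mk_zero, Fin.mk_one]
  have e0 := keyeval S ε₁ ε₂ hε 0
  have e1 := keyeval S ε₁ ε₂ hε 1
  have em1 := keyeval S ε₁ ε₂ hε (-1)
  rw [hNr 0, det4'] at e0
  rw [hNr 1, det4'] at e1
  rw [hNr (-1), det4'] at em1
  simp only [hs10, hs20, hs21, hs30, hs31, hs32] at e0 e1 em1
  have hDS : ((S 0 0)*(S 1 1)*(S 2 2)*(S 3 3) - (S 0 0)*(S 1 1)*(S 2 3)*(S 2 3) - (S 0 0)*(S 1 2)*(S 1 2)*(S 3 3) + (S 0 0)*(S 1 2)*(S 2 3)*(S 1 3) + (S 0 0)*(S 1 3)*(S 1 2)*(S 2 3) - (S 0 0)*(S 1 3)*(S 2 2)*(S 1 3) - (S 0 1)*(S 0 1)*(S 2 2)*(S 3 3) + (S 0 1)*(S 0 1)*(S 2 3)*(S 2 3) + (S 0 1)*(S 1 2)*(S 0 2)*(S 3 3) - (S 0 1)*(S 1 2)*(S 2 3)*(S 0 3) - (S 0 1)*(S 1 3)*(S 0 2)*(S 2 3) + (S 0 1)*(S 1 3)*(S 2 2)*(S 0 3) + (S 0 2)*(S 0 1)*(S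 1 2)*(S 3 3) - (S 0 2)*(S 0 1)*(S 2 3)*(S 1 3) - (S 0 2)*(S 1 1)*(S 0 2)*(S 3 3) + (S 0 2)*(S 1 1)*(S 2 3)*(S 0 3) + (S 0 2)*(S 1 3)*(S 0 2)*(S 1 3) - (S 0 2)*(S 1 3)*(S 1 2)*(S 0 3) - (S 0 3)*(S 0 1)*(S 1 2)*(S 2 3) + (S 0 3)*(S 0 1)*(S 2 2)*(S 1 3) + (S 0 3)*(S 1 1)*(S 0 2)*(S 2 3) - (S 0 3)*(S 1 1)*(S 2 2)*(S 0 3) - (S 0 3)*(S 1 2)*(S 0 2)*(S 1 3) + (S 0 3)*(S 1 2)*(S 1 2)*(S 0 3)) = (ε₁*ε₂)^2 := by linear_combination e0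
  have hsum : ε₁^2 + ε₂^2 = ((S 0 0)*(S 1 1) - (S 0 1)^2) + ((S 2 2)*(S 3 3) - (S 2 3)^2) + 2*((S 0 2)*(S 1 3) - (S 0 3)*(S 1 2)) := by
    linear_combination e0 - e1/2 - em1/2
  have hX : ∀ u0 u1 : ℝ, 0 ≤ (((S 2 2)*(S 3 3) - (S 2 3)^2)*(S 0 0) - ((S 3 3)*(S 0 2)^2 - 2*(S 2 3)*(S 0 2)*(S 0 3) + (S 2 2)*(S 0 3)^2))*u0^2 + 2*(((S 2 2)*(S 3 3) - (S 2 3)^2)*(S 0 1) - ((S 3 3)*(S 0 2)*(S 1 2) - (S 2 3)*((S 0 2)*(S 1 3) + (S 0 3)*(S 1 2)) + (S 2 2)*(S 0 3)*(S 1 3)))*u0*u1 + (((S 2 2)*(S 3 3) - (S 2 3)^2)*(S 1 1) - ((S 3 3)*(S 1 2)^2 - 2*(S 2 3)*(S 1 2)*(S 1 3) + (S 2 2)*(S 1 3)^2))*u1^2 := by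
    intro u0 u1
    have h := hq (((S 2 2)*(S 3 3) - (S 2 3)^2)*u0) (((S 2 2)*(S 3 3) - (S 2 3)^2)*u1) (-((S 3 3)*((S 0 2)*u0 + (S 1 2)*u1) - (S 2 3)*((S 0 3)*u0 + (S 1 3)*u1))) (-(-(S 2 3)*((S 0 2)*u0 + (S 1 2)*u1) + (S 2 2)*((S 0 3)*u0 + (S 1 3)*u1)))
    nlinarith [h, hDB]
  have hb0 : (blk S 0 0).det = (S 0 0) * (S 1 1) - (S 0 1)^2 := by
    have b0 : (blk S 0 0) = !![S 0 0, S 0 1; S 1 0, S 1 1] := by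
      ext i j; fin_cases i <;> fin_cases j <;> rfl
    rw [b0, Matrix.det_fin_two_of]
    linear_combination (-(S 0 1))*hs10
  have hb1 : (blk S 1 1).det = (S 2 2) * (S 3 3) - (S 2 3)^2 := by
    have b1 : (blk S 1 1) = !![S 2 2, S 2 3; S 3 2, S 3 3] := by
      ext i j; fin_cases i <;> fin_cases j <;> rfl
    rw [b1, Matrix.det_fin_two_of]
    linear_combination (-(S 2 3))*hs32
  rw [hb0, hb1]
  exact mainScalar (S 0 0) (S 0 1) (S 0 2) (S 0 3) (S 1 1) (S 1 2) (S 1 3)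
    (S 2 2) (S 2 3) (S 3 3) ε₁ ε₂ hp22 hDA hDB h₁ h₂ hDS hsum hX
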